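/- Let g : ℝ^d → ℝ be convex and continuous, f : ℝ^d → ℝ be μ-strongly convex (μ > 0) and continuous. Let x* be the unique minimizer of f over the set of global minimizers of g. For each λ > 0 let x_λ* be the unique minimizer of g + λf. If x_λ* converges to some point as λ → 0⁺, then that limit equals x*, i.e., ‖x* − x_λ*‖ → 0 as λ → 0⁺. -/
import Mathlib


open Filter Topology

/-- Convergence of regularized minimizers to the bilevel solution as λ → 0⁺. -/
theorem reg_minimizer_tendsto {d : ℕ} (f g : EuclideanSpace ℝ (Fin d) → ℝ) (μ : ℝ)
    (hμ : 0 < μ)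
    (hg : ConvexOn ℝ Set.univ g) (hgc : Continuous g)
    (hf : ConvexOn ℝ Set.univ (fun x => f x - μ / 2 * ‖x‖ ^ 2)) (hfc : Continuous f)
    (xstar : EuclideanSpace ℝ (Fin d))
    (hxstar_g : ∀ y, g xstar ≤ g y)
    (hxstar_f : ∀ y, (∀ z, g y ≤ g z) → f xstar ≤ f y)
    (hxstar_uniq : ∀ y, (∀ z, g y ≤ g z) → (∀ y', (∀ z, g y' ≤ g z) → f y ≤ f y') → y = xstar)
    (xl : ℝ → EuclideanSpace ℝ (Fin d))
    (hxl : ∀ l : ℝ, 0 < l → ∀ y, g (xl l) + l * f (xl l) ≤ g y + l * f y)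
    (p : EuclideanSpace ℝ (Fin d))
    (hconv : Tendsto xl (𝓝[>] (0 : ℝ)) (𝓝 p)) :
    p = xstar ∧ Tendsto (fun l => ‖xstar - xl l‖) (𝓝[>] (0 : ℝ)) (𝓝 0) := by
  have hfx : Tendsto (fun l => f (xl l)) (𝓝[>] (0 : ℝ)) (𝓝 (f p)) :=
    (hfc.tendsto p).comp hconv
  have hgx : Tendsto (fun l => g (xl l)) (𝓝[>] (0 : ℝ)) (𝓝 (g p)) :=
    (hgc.tendsto p).comp hconv
  -- f (xl l) ≤ f xstar for l > 0
  have hfle : ∀ l : ℝ, 0 < l → f (xl l) ≤ f xstar := by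
    intro l hl
    have h1 := hxl l hl xstar
    have h2 := hxstar_g (xl l)
    nlinarith
  have hfp : f p ≤ f xstar := by
    refine le_of_tendsto hfx ?_
    filter_upwards [self_mem_nhdsWithin] with l hl using hfle l hl
  -- g p ≤ g xstar via squeeze
  have hgp : g p ≤ g xstar := by
    have hub : ∀ᶠ l in 𝓝[>] (0 : ℝ),
        g (xl l) ≤ g xstar + l * (f xstar - f (xl l)) := by
      filter_upwards [self_mem_nhdsWithin] with l hl
      have h1 := hxl l hl xstar
      nlinarith
    have hrhs : Tendsto (fun l : ℝ => g xstar + l * (f xstar - f (xl l)))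
        (𝓝[>] (0 : ℝ)) (𝓝 (g xstar)) := by
      have hl0 : Tendsto (fun l : ℝ => l) (𝓝[>] (0 : ℝ)) (𝓝 0) :=
        tendsto_id.mono_left nhdsWithin_le_nhds
      have : Tendsto (fun l : ℝ => l * (f xstar - f (xl l))) (𝓝[>] (0 : ℝ)) (𝓝 0) := by
        have := hl0.mul ((tendsto_const_nhds (x := f xstar)).sub hfx)
        simpa using this
      simpa using tendsto_const_nhds.add this
    exact le_of_tendsto_of_tendsto hgx hrhs hub
  have hpmin : ∀ z, g p ≤ g z := fun z => hgp.trans (hxstar_g z)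
  have hpeq : p = xstar := by
    refine hxstar_uniq p hpmin fun y' hy' => hfp.trans (hxstar_f y' hy')
  refine ⟨hpeq, ?_⟩
  have : Tendsto (fun l => ‖xstar - xl l‖) (𝓝[>] (0 : ℝ)) (𝓝 ‖xstar - p‖) :=
    ((continuous_const.sub continuous_id).norm.tendsto p).comp hconv
  simpa [hpeq, sub_self] using this
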